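/- The standard simplicial interval $\Delta[1]$ admits a unique simplicial monoid structure with unit $(1) \in \Delta[1]_0$: the multiplication in degree $n$ sends a pair of monotone maps $(f,g) : [n] \to [1]$ to their pointwise minimum $\min(f,g)$, and this is the only simplicial monoid structure on $\Delta[1]$ with unit the vertex $1$. -/
import Mathlib


/-- The standard simplicial interval `Δ[1]`: its `n`-simplices are the monotone maps
`[n] → [1]`, i.e. monotone maps `Fin (n+1) → Fin 2`. -/
def D1 (n : ℕ) : Type := { f : Fin (n + 1) → Fin 2 // Monotone f }

/-- Face operators of `Δ[1]`: precomposition with the coface `δ_j`. -/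
def D1d (n : ℕ) (j : Fin (n + 2)) (f : D1 (n + 1)) : D1 n :=
  ⟨f.1 ∘ j.succAbove, f.2.comp (Fin.strictMono_succAbove j).monotone⟩

/-- Degeneracy operators of `Δ[1]`: precomposition with the codegeneracy `σ_j`. -/
def D1s (n : ℕ) (j : Fin (n + 1)) (f : D1 n) : D1 (n + 1) :=
  ⟨f.1 ∘ j.predAbove, f.2.comp (Fin.predAbove_right_monotone j)⟩

/-- The vertex `(1)` of `Δ[1]`, degenerated to degree `n`: the unit of the monoid
structure. -/
def D1one (n : ℕ) : D1 n := ⟨fun _ => 1, monotone_const⟩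

/-- The pointwise minimum: the multiplication of the simplicial monoid `Δ[1]`. -/
def D1mul (n : ℕ) (f g : D1 n) : D1 n := ⟨fun i => min (f.1 i) (g.1 i), f.2.min g.2⟩

/-- Key lemma: any `m` commuting with face maps is determined vertexwise by `m 0`. -/
theorem D1_key (m : ∀ n, D1 n → D1 n → D1 n)
    (hd : ∀ n (j : Fin (n + 2)) (f g : D1 (n + 1)),
        D1d n j (m (n + 1) f g) = m n (D1d n j f) (D1d n j g)) :
    ∀ n (f g : D1 n) (i : Fin (n + 1)),
      (m n f g).1 i =
        (m 0 ⟨fun _ => f.1 i, monotone_const⟩ ⟨fun _ => g.1 i, monotone_const⟩).1 0 := by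
  intro n
  induction n with
  | zero =>
    intro f g i
    have hi : i = 0 := by omega
    subst hi
    have hf : (⟨fun _ => f.1 0, monotone_const⟩ : D1 0) = f :=
      Subtype.ext (funext fun j => congrArg f.1 (by omega : (0 : Fin (0 + 1)) = j))
    have hg : (⟨fun _ => g.1 0, monotone_const⟩ : D1 0) = g :=
      Subtype.ext (funext fun j => congrArg g.1 (by omega : (0 : Fin (0 + 1)) = j))
    rw [hf, hg]
  | succ n ih =>
    intro f g i
    induction i using Fin.lastCases with
    | last =>
      have h := congrArg (fun x => x.1 (Fin.last n)) (hd n 0 f g)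
      have h2 := ih (D1d n 0 f) (D1d n 0 g) (Fin.last n)
      simp only [D1d, Function.comp_apply, Function.comp, Fin.succAbove_zero,
        Fin.succ_last] at h h2
      exact h.trans h2
    | cast i' =>
      have h := congrArg (fun x => x.1 i') (hd n (Fin.last (n + 1)) f g)
      have h2 := ih (D1d n (Fin.last (n + 1)) f) (D1d n (Fin.last (n + 1)) g) i'
      simp only [D1d, Function.comp_apply, Function.comp, Fin.succAbove_last] at h h2
      exact h.trans h2

/-- the pointwise minimum makes `Δ[1]` a simplicial monoid with unit the
vertex `(1)`, and this is the *unique* simplicial monoid structure on `Δ[1]` with unit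
the vertex `(1)`. -/
theorem D1_unique_simplicial_monoid :
    -- min is a simplicial map Δ[1] × Δ[1] → Δ[1]
    (∀ n (j : Fin (n + 2)) (f g : D1 (n + 1)),
      D1d n j (D1mul (n + 1) f g) = D1mul n (D1d n j f) (D1d n j g)) ∧
    (∀ n (j : Fin (n + 1)) (f g : D1 n),
      D1s n j (D1mul n f g) = D1mul (n + 1) (D1s n j f) (D1s n j g)) ∧
    -- the unit is a simplicial point and min is an associative, unital multiplication
    (∀ n (j : Fin (n + 2)), D1d n j (D1one (n + 1)) = D1one n) ∧
    (∀ n (j : Fin (n + 1)), D1s n j (D1one n) = D1one (n + 1)) ∧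
    (∀ n (f g h : D1 n), D1mul n (D1mul n f g) h = D1mul n f (D1mul n g h)) ∧
    (∀ n (f : D1 n), D1mul n (D1one n) f = f) ∧
    (∀ n (f : D1 n), D1mul n f (D1one n) = f) ∧
    -- uniqueness
    (∀ m : ∀ n, D1 n → D1 n → D1 n,
      (∀ n (j : Fin (n + 2)) (f g : D1 (n + 1)),
        D1d n j (m (n + 1) f g) = m n (D1d n j f) (D1d n j g)) →
      (∀ n (j : Fin (n + 1)) (f g : D1 n),
        D1s n j (m n f g) = m (n + 1) (D1s n j f) (D1s n j g)) →
      (∀ n (f g h : D1 n), m n (m n f g) h = m n f (m n g h)) →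
      (∀ n (f : D1 n), m n (D1one n) f = f) →
      (∀ n (f : D1 n), m n f (D1one n) = f) →
      ∀ n f g, m n f g = D1mul n f g) := by
  have hmin1 : ∀ a : Fin 2, min 1 a = a := by decide
  have hmin1' : ∀ a : Fin 2, min a 1 = a := by decide
  refine ⟨fun n j f g => rfl, fun n j f g => rfl, fun n j => rfl, fun n j => rfl,
    fun n f g h => Subtype.ext (funext fun i => min_assoc _ _ _),
    fun n f => Subtype.ext (funext fun i => hmin1 _),
    fun n f => Subtype.ext (funext fun i => hmin1' _),
    fun m hd hs hassoc hl hr => ?_⟩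
  -- `m0` : the degree-0 multiplication
  set m0 : Fin 2 → Fin 2 → Fin 2 := fun a b =>
    (m 0 ⟨fun _ => a, monotone_const⟩ ⟨fun _ => b, monotone_const⟩).1 0 with hm0
  have key := D1_key m hd
  have h1b : ∀ b : Fin 2, m0 1 b = b := fun b =>
    congrArg (fun x => x.1 0) (hl 0 ⟨fun _ => b, monotone_const⟩)
  have ha1 : ∀ a : Fin 2, m0 a 1 = a := fun a =>
    congrArg (fun x => x.1 0) (hr 0 ⟨fun _ => a, monotone_const⟩)
  have h00 : m0 0 0 = 0 := by
    have he : Monotone (![0, 1] : Fin 2 → Fin 2) := by decide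
    set e : D1 1 := ⟨![0, 1], he⟩ with hedef
    set z : D1 1 := ⟨fun _ => 0, monotone_const⟩ with hzdef
    have hmono := (m 1 e z).2 (Fin.zero_le 1)
    rw [key 1 e z 0, key 1 e z 1] at hmono
    exact Fin.le_zero_iff.mp (hmono.trans_eq (h1b 0))
  have hm0min : ∀ a b : Fin 2, m0 a b = min a b := by
    intro a b
    have ha : a = 0 ∨ a = 1 := by omega
    have hb : b = 0 ∨ b = 1 := by omega
    rcases ha with rfl | rfl <;> rcases hb with rfl | rfl <;>
      simp [h00, h1b, ha1, hmin1, hmin1']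
  intro n f g
  exact Subtype.ext (funext fun i => (key n f g i).trans (hm0min (f.1 i) (g.1 i)))
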